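/- Every countably generated semigroup can be embedded into a 0-simple two-generated semigroup. -/

import Mathlib

namespace ZS
set_option linter.unusedSectionVars false
open scoped Classical

variable {M : Type} [Semigroup M]

abbrev PF (M : Type) : Type := List (ℕ ⊕ M) → Option (List (ℕ ⊕ M))

instance : Monoid (PF M) where
  mul f g := fun w => (f w).bind g
  one := fun w => some w
  mul_assoc f g h := by
    funext w
    show ((f w).bind g).bind h = (f w).bind fun x => (g x).bind h
    cases f w <;> rfl
  one_mul f := by funext w; rfl
  mul_one f := by
    funext w
    show (f w).bind some = f w
    cases f w <;> rfl

lemma mul_apply (f g : PF M) (w) : (f * g) w = (f w).bind g := rfl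

/-- the dispatcher machine -/
noncomputable def dd (σ : ℕ → M) : PF M := fun L =>
  match L with
  | .inl 0 :: .inl j :: W => some (.inl (j+1) :: W)
  | .inl 1 :: .inl j :: .inr y :: V => some (.inr (y * σ j) :: V)
  | .inl 1 :: .inl j :: .inl x :: V => some (.inr (σ j) :: .inl x :: V)
  | .inl 2 :: .inl j :: .inr y :: V => if y = σ j then some V else none
  | .inl 3 :: .inl j :: .inl i :: V => if i = j then some V else none
  | .inl 4 :: .inl j :: W => some (.inr (σ j) :: W)
  | _ => none

/-- push the index letter 0 -/
def p0 : PF M := fun W => some (.inl 0 :: W)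

variable (σ : ℕ → M)

lemma dd_local : ∀ X out, dd σ X = some out → ∀ Z, dd σ (X ++ Z) = some (out ++ Z) := by
  intro X out h Z
  rcases X with _ | ⟨a, X⟩
  · simp [dd] at h
  rcases a with n | s
  · rcases X with _ | ⟨b, X⟩
    · rcases n with _|_|_|_|_|n <;> simp [dd] at h
    rcases b with j | s
    · rcases n with _|_|_|_|_|n
      · simp only [dd, Option.some.injEq] at h
        subst h; rfl
      · rcases X with _ | ⟨w, X⟩
        · simp [dd] at h
        rcases w with x | y
        · simp only [dd, Option.some.injEq] at h; subst h; rfl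
        · simp only [dd, Option.some.injEq] at h; subst h; rfl
      · rcases X with _ | ⟨w, X⟩
        · simp [dd] at h
        rcases w with x | y
        · simp [dd] at h
        · by_cases hy : y = σ j
          · simp only [dd] at h
            rw [if_pos hy, Option.some.injEq] at h
            subst h
            show (if y = σ j then some (X ++ Z) else none) = some (X ++ Z)
            rw [if_pos hy]
          · simp only [dd] at h
            rw [if_neg hy] at h
            exact absurd h (by simp)
      · rcases X with _ | ⟨w, X⟩
        · simp [dd] at h
        rcases w with x | y
        · by_cases hx : x = j
          · simp only [dd] at h
            rw [if_pos hx, Option.some.injEq] at h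
            subst h
            show (if x = j then some (X ++ Z) else none) = some (X ++ Z)
            rw [if_pos hx]
          · simp only [dd] at h
            rw [if_neg hx] at h
            exact absurd h (by simp)
        · simp [dd] at h
      · simp only [dd, Option.some.injEq] at h; subst h; rfl
      · simp [dd] at h
    · rcases n with _|_|_|_|_|n <;> simp [dd] at h
  · simp [dd] at h

/-- increment machine -/
noncomputable def iot : PF M := p0 * dd σ

lemma iot_eval (n : ℕ) (Z) : iot σ (.inl n :: Z) = some (.inl (n+1) :: Z) := rfl

/-- push the index letter `n` -/
noncomputable def pushN : ℕ → PF M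
  | 0 => p0
  | n+1 => pushN n * iot σ

lemma pushN_eval (n : ℕ) (Z) : pushN σ n Z = some (.inl n :: Z) := by
  induction n with
  | zero => rfl
  | succ n ih =>
      show (pushN σ n Z).bind (iot σ) = _
      rw [ih]
      rfl

/-- the subsemigroup generated by the two machines -/
noncomputable def Tsub : Subsemigroup (PF M) := Subsemigroup.closure {dd σ, p0}

lemma dd_mem : dd σ ∈ Tsub σ := Subsemigroup.subset_closure (Set.mem_insert _ _)

lemma p0_mem : p0 ∈ Tsub σ :=
  Subsemigroup.subset_closure (Set.mem_insert_iff.mpr (Or.inr rfl))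

lemma iot_mem : iot σ ∈ Tsub σ := mul_mem (p0_mem σ) (dd_mem σ)

lemma pushN_mem (n : ℕ) : pushN σ n ∈ Tsub σ := by
  induction n with
  | zero => exact p0_mem σ
  | succ n ih => exact mul_mem ih (iot_mem σ)

/-- locality: every machine in `Tsub` commutes with deepening the stack -/
lemma mem_local {g : PF M} (hg : g ∈ Tsub σ) :
    ∀ X out, g X = some out → ∀ Z, g (X ++ Z) = some (out ++ Z) := by
  refine Subsemigroup.closure_induction ?_ ?_ hg
  · rintro x (rfl | rfl)
    · exact dd_local σ
    · intro X out h Z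
      simp only [p0, Option.some.injEq] at h
      subst h; rfl
  · rintro f g' - - hf hg' X out h Z
    rw [mul_apply] at h
    rcases hfx : f X with _ | mid
    · rw [hfx] at h; exact absurd h (by simp)
    · rw [hfx, Option.bind_some] at h
      rw [mul_apply, hf X mid hfx Z, Option.bind_some]
      exact hg' mid out h Z

/-- the zero: empty partial map -/
def zf : PF M := fun _ => none

noncomputable def zword : PF M := p0 * p0 * iot σ * iot σ * iot σ * iot σ * dd σ * dd σ

lemma zword_eq : zword σ = zf := by
  funext W; rfl

lemma zf_mem : zf ∈ Tsub σ := by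
  rw [← zword_eq σ]
  exact mul_mem (mul_mem (mul_mem (mul_mem (mul_mem (mul_mem (mul_mem (p0_mem σ) (p0_mem σ))
    (iot_mem σ)) (iot_mem σ)) (iot_mem σ)) (iot_mem σ)) (dd_mem σ)) (dd_mem σ)

end ZS

namespace ZS
set_option linter.unusedSectionVars false
open scoped Classical
variable {M : Type} [Semigroup M] (σ : ℕ → M) (hσ : Function.Surjective σ)

/-- index of an element -/
noncomputable def ns (m : M) : ℕ := Function.surjInv hσ m

lemma ns_eq (m : M) : σ (ns σ hσ m) = m := Function.surjInv_eq hσ m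

/-- the embedded copy of `m`: multiply the exposed top by `m` -/
noncomputable def sg (m : M) : PF M := pushN σ (ns σ hσ m) * pushN σ 1 * dd σ

lemma sg_mem (m : M) : sg σ hσ m ∈ Tsub σ :=
  mul_mem (mul_mem (pushN_mem σ _) (pushN_mem σ 1)) (dd_mem σ)

lemma sg_apply (m : M) (W) :
    sg σ hσ m W = dd σ (.inl 1 :: .inl (ns σ hσ m) :: W) := by
  show ((pushN σ (ns σ hσ m) W).bind (pushN σ 1)).bind (dd σ) = _
  rw [pushN_eval, Option.bind_some, pushN_eval, Option.bind_some]

/-- effect of `sg m` on a nonempty stack -/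
def sp (m : M) : List (ℕ ⊕ M) → List (ℕ ⊕ M)
  | .inr y :: V => .inr (y * m) :: V
  | W => .inr m :: W

lemma sg_eval_nil (m : M) : sg σ hσ m [] = none := by
  rw [sg_apply]; rfl

lemma sg_eval_cons (m : M) (w V) :
    sg σ hσ m (w :: V) = some (sp m (w :: V)) := by
  rw [sg_apply]
  rcases w with n | y
  · show some (.inr (σ (ns σ hσ m)) :: .inl n :: V) = _
    rw [ns_eq σ hσ m]; rfl
  · show some (.inr (y * σ (ns σ hσ m)) :: V) = _
    rw [ns_eq σ hσ m]; rfl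

lemma sg_mul (m m' : M) : sg σ hσ m * sg σ hσ m' = sg σ hσ (m * m') := by
  funext W
  rw [mul_apply]
  rcases W with _ | ⟨w, V⟩
  · rw [sg_eval_nil, sg_eval_nil]; rfl
  · rw [sg_eval_cons, Option.bind_some, sg_eval_cons]
    have : sg σ hσ m' (sp m (w :: V)) = some (sp m' (sp m (w :: V))) := by
      rcases w with n | y
      · exact sg_eval_cons σ hσ m' _ _
      · exact sg_eval_cons σ hσ m' _ _
    rw [this]
    rcases w with n | y <;> simp [sp, mul_assoc]

lemma sg_inj : Function.Injective (sg σ hσ) := by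
  intro m m' h
  have := congrFun h [.inl 0]
  rw [sg_eval_cons, sg_eval_cons] at this
  simpa [sp] using this

/-- push a letter -/
noncomputable def pl : (ℕ ⊕ M) → PF M
  | .inl n => pushN σ n
  | .inr s => pushN σ (ns σ hσ s) * pushN σ 4 * dd σ

lemma pl_mem (x) : pl σ hσ x ∈ Tsub σ := by
  rcases x with n | s
  · exact pushN_mem σ n
  · exact mul_mem (mul_mem (pushN_mem σ _) (pushN_mem σ 4)) (dd_mem σ)

lemma pl_eval (x) (Z) : pl σ hσ x Z = some (x :: Z) := by
  rcases x with n | s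
  · exact pushN_eval σ n Z
  · show ((pushN σ (ns σ hσ s) Z).bind (pushN σ 4)).bind (dd σ) = _
    rw [pushN_eval, Option.bind_some, pushN_eval, Option.bind_some]
    show some (.inr (σ (ns σ hσ s)) :: Z) = _
    rw [ns_eq σ hσ s]

/-- push a whole stack (head of the list ends topmost) -/
noncomputable def pushw : List (ℕ ⊕ M) → PF M
  | [] => 1
  | x :: X => pushw X * pl σ hσ x

lemma pushw_eval (X W) : pushw σ hσ X W = some (X ++ W) := by
  induction X with
  | nil => rfl
  | cons x X ih =>
      show (pushw σ hσ X W).bind (pl σ hσ x) = _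
      rw [ih, Option.bind_some, pl_eval]
      rfl

lemma pushw_mem (X : List (ℕ ⊕ M)) (hX : X ≠ []) : pushw σ hσ X ∈ Tsub σ := by
  induction X with
  | nil => exact absurd rfl hX
  | cons x X ih =>
      rcases X with _ | ⟨y, X⟩
      · show pushw σ hσ [] * pl σ hσ x ∈ Tsub σ
        rw [show pushw σ hσ [] = 1 from rfl, one_mul]
        exact pl_mem σ hσ x
      · exact mul_mem (ih (by simp)) (pl_mem σ hσ x)

/-- check-and-pop one letter -/
noncomputable def kl : (ℕ ⊕ M) → PF M
  | .inl i => pushN σ i * pushN σ 3 * dd σ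
  | .inr s => pushN σ (ns σ hσ s) * pushN σ 2 * dd σ

lemma kl_mem (x) : kl σ hσ x ∈ Tsub σ := by
  rcases x with n | s
  · exact mul_mem (mul_mem (pushN_mem σ _) (pushN_mem σ 3)) (dd_mem σ)
  · exact mul_mem (mul_mem (pushN_mem σ _) (pushN_mem σ 2)) (dd_mem σ)

lemma kl_eval (x) (Z) : kl σ hσ x (x :: Z) = some Z := by
  rcases x with i | s
  · show ((pushN σ i (.inl i :: Z)).bind (pushN σ 3)).bind (dd σ) = _
    rw [pushN_eval, Option.bind_some, pushN_eval, Option.bind_some]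
    show (if i = i then some Z else none) = some Z
    rw [if_pos rfl]
  · show ((pushN σ (ns σ hσ s) (.inr s :: Z)).bind (pushN σ 2)).bind (dd σ) = _
    rw [pushN_eval, Option.bind_some, pushN_eval, Option.bind_some]
    show (if s = σ (ns σ hσ s) then some Z else none) = some Z
    rw [if_pos (ns_eq σ hσ s).symm]

/-- check-and-pop a whole known word -/
noncomputable def kw : List (ℕ ⊕ M) → PF M
  | [] => 1
  | x :: X => kl σ hσ x * kw X

lemma kw_eval (w W) : kw σ hσ w (w ++ W) = some W := by
  induction w with
  | nil => rfl
  | cons x X ih =>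
      show (kl σ hσ x ((x :: X) ++ W)).bind (kw σ hσ X) = _
      rw [show (x :: X) ++ W = x :: (X ++ W) from rfl, kl_eval, Option.bind_some, ih]

lemma kw_mem (w : List (ℕ ⊕ M)) (hw : w ≠ []) : kw σ hσ w ∈ Tsub σ := by
  induction w with
  | nil => exact absurd rfl hw
  | cons x X ih =>
      rcases X with _ | ⟨y, X⟩
      · show kl σ hσ x * kw σ hσ [] ∈ Tsub σ
        rw [show kw σ hσ [] = 1 from rfl, mul_one]
        exact kl_mem σ hσ x
      · exact mul_mem (kl_mem σ hσ x) (ih (by simp))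

end ZS

namespace ZS
set_option linter.unusedSectionVars false
open scoped Classical
variable {M : Type} [Semigroup M] (σ : ℕ → M) (hσ : Function.Surjective σ)

/-- The two-generated 0-simple semigroup. -/
noncomputable def TT : Type := ↥(Tsub σ)

noncomputable instance : Semigroup (TT σ) :=
  inferInstanceAs (Semigroup ↥(Tsub σ))

noncomputable instance instSWZ : SemigroupWithZero (TT σ) :=
  { (inferInstanceAs (Semigroup (TT σ)) : Semigroup (TT σ)) with
    zero := ⟨zf, zf_mem σ⟩
    zero_mul := fun a => Subtype.ext (funext fun w => rfl)
    mul_zero := fun a => Subtype.ext (funext fun w => by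
      show (a.val w).bind (fun _ => none) = none
      cases a.val w <;> rfl) }

lemma zero_val : (0 : TT σ).val = zf := rfl

lemma mul_val (x y : TT σ) : (x * y).val = x.val * y.val := rfl

/-- the embedding -/
noncomputable def emb : M →ₙ* TT σ where
  toFun m := ⟨sg σ hσ m, sg_mem σ hσ m⟩
  map_mul' m m' := Subtype.ext (sg_mul σ hσ m m').symm

lemma emb_inj : Function.Injective (emb σ hσ) := by
  intro m m' h
  exact sg_inj σ hσ (congrArg Subtype.val h)

lemma prod_ne_zero : ∃ x y : TT σ, x * y ≠ 0 := by
  refine ⟨⟨p0, p0_mem σ⟩, ⟨p0, p0_mem σ⟩, fun h => ?_⟩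
  have := congrFun (congrArg Subtype.val h) []
  change (((p0 : PF M) * p0 : PF M) []) = none at this
  simp [mul_val, zero_val, mul_apply, p0, zf] at this

include hσ in
/-- 0-simplicity -/
lemma zero_simple (I : Set (TT σ)) (hne : I.Nonempty)
    (hcl : ∀ s ∈ I, ∀ t : TT σ, t * s ∈ I ∧ s * t ∈ I) :
    I = {0} ∨ I = Set.univ := by
  by_cases hsub : I ⊆ {0}
  · left
    obtain ⟨y, hy⟩ := hne
    have hy0 : y = 0 := hsub hy
    refine Set.Subset.antisymm hsub ?_
    rintro x rfl
    exact hy0 ▸ hy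
  · right
    obtain ⟨m, hmI, hm0⟩ : ∃ m ∈ I, m ≠ 0 := by
      by_contra hc
      push_neg at hc
      exact hsub fun x hx => hc x hx
    have hval : m.val ≠ zf := fun h => hm0 (Subtype.ext h)
    obtain ⟨X, hX⟩ : ∃ X, m.val X ≠ none := by
      by_contra hc
      push_neg at hc
      exact hval (funext fun W => hc W)
    obtain ⟨out, hout⟩ := Option.ne_none_iff_exists'.mp hX
    set X₀ : List (ℕ ⊕ M) := X ++ [.inl 0] with hX₀
    set out₀ : List (ℕ ⊕ M) := out ++ [.inl 0] with hout₀
    have hmX₀ : m.val X₀ = some out₀ := mem_local σ m.2 X out hout [.inl 0]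
    set P : TT σ := ⟨pushw σ hσ X₀, pushw_mem σ hσ X₀ (by simp [hX₀])⟩ with hP
    refine Set.eq_univ_of_forall fun t => ?_
    set K : TT σ := ⟨kw σ hσ out₀, kw_mem σ hσ out₀ (by simp [hout₀])⟩ with hK
    have key : (P * m) * (K * t) = t := by
      apply Subtype.ext
      funext W
      show (((pushw σ hσ X₀ W).bind m.val).bind ((kw σ hσ out₀) * t.val)) = t.val W
      rw [pushw_eval, Option.bind_some,
        mem_local σ m.2 X₀ out₀ hmX₀ W, Option.bind_some, mul_apply,
        kw_eval, Option.bind_some]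
    have h1 : P * m ∈ I := (hcl m hmI P).1
    have h2 : (P * m) * (K * t) ∈ I := (hcl _ h1 (K * t)).2
    rwa [key] at h2

/-- two-generation -/
lemma two_gen : ∃ a b : TT σ,
    Subsemigroup.closure ({a, b} : Set (TT σ)) = ⊤ := by
  refine ⟨⟨dd σ, dd_mem σ⟩, ⟨p0, p0_mem σ⟩, ?_⟩
  set A : TT σ := ⟨dd σ, dd_mem σ⟩
  set B : TT σ := ⟨p0, p0_mem σ⟩
  set valHom : TT σ →ₙ* PF M := ⟨Subtype.val, fun _ _ => rfl⟩ with hvalHom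
  have hle : Tsub σ ≤ Subsemigroup.map valHom (Subsemigroup.closure {A, B}) := by
    apply Subsemigroup.closure_le.mpr
    rintro x (rfl | rfl)
    · exact ⟨A, Subsemigroup.subset_closure (Set.mem_insert _ _), rfl⟩
    · exact ⟨B, Subsemigroup.subset_closure (Set.mem_insert_iff.mpr (Or.inr rfl)), rfl⟩
  rw [eq_top_iff]
  rintro ⟨g, hg⟩ -
  obtain ⟨y, hy, hyval⟩ := hle hg
  have : y = ⟨g, hg⟩ := Subtype.ext hyval
  exact this ▸ hy

/-- the main construction -/
theorem main (M : Type) [Semigroup M] (σ : ℕ → M) (hσ : Function.Surjective σ) :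
    ∃ (T : Type) (_ : SemigroupWithZero T) (g : M →ₙ* T),
      Function.Injective g ∧
      (∀ I : Set T, I.Nonempty → (∀ s ∈ I, ∀ t : T, t * s ∈ I ∧ s * t ∈ I) →
        I = {0} ∨ I = Set.univ) ∧
      (∃ x y : T, x * y ≠ 0) ∧
      ∃ a b : T, Subsemigroup.closure ({a, b} : Set T) = ⊤ :=
  ⟨TT σ, instSWZ σ, emb σ hσ, emb_inj σ hσ, zero_simple σ hσ, prod_ne_zero σ, two_gen σ⟩

end ZS

lemma ZS.countable_of_gen {S : Type} [Semigroup S]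
    (hS : ∃ X : Set S, X.Countable ∧ Subsemigroup.closure X = ⊤) : Countable S := by
  obtain ⟨X, hXc, hXt⟩ := hS
  haveI := hXc.to_subtype
  haveI : Countable (FreeSemigroup ↥X) := by
    have hinj : Function.Injective (fun w : FreeSemigroup ↥X => (w.head, w.tail)) := by
      intro a b h
      cases a; cases b
      simpa using h
    exact hinj.countable
  set φ : FreeSemigroup ↥X →ₙ* S := FreeSemigroup.lift (fun x : ↥X => (x : S)) with hφ
  have hsur : Function.Surjective φ := by
    intro s
    have hs : s ∈ Subsemigroup.closure X := hXt ▸ Subsemigroup.mem_top s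
    have hle : Subsemigroup.closure X ≤ MulHom.srange φ := by
      apply Subsemigroup.closure_le.mpr
      intro x hx
      exact ⟨FreeSemigroup.of ⟨x, hx⟩, by simp [hφ]⟩
    obtain ⟨w, hw⟩ := hle hs
    exact ⟨w, hw⟩
  exact hsur.countable

/-- Every countably generated semigroup can be embedded into a 0-simple
two-generated semigroup: a semigroup `T` with zero is 0-simple if its only
two-sided ideals are `{0}` and `T`, and `T·T ≠ {0}`. -/
theorem countably_generated_semigroup_embeds_into_zero_simple_two_generated
    (S : Type) [Semigroup S]
    (hS : ∃ X : Set S, X.Countable ∧ Subsemigroup.closure X = ⊤) :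
    ∃ (T : Type) (_ : SemigroupWithZero T) (f : S →ₙ* T),
      Function.Injective f ∧
      (∀ I : Set T, I.Nonempty → (∀ s ∈ I, ∀ t : T, t * s ∈ I ∧ s * t ∈ I) →
        I = {0} ∨ I = Set.univ) ∧
      (∃ x y : T, x * y ≠ 0) ∧
      ∃ a b : T, Subsemigroup.closure ({a, b} : Set T) = ⊤ := by
  haveI : Countable S := ZS.countable_of_gen hS
  rcases isEmpty_or_nonempty S with hS0 | hS0
  · obtain ⟨T, inst, g, hginj, h1, h2, h3⟩ := ZS.main ℕ id Function.surjective_id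
    exact ⟨T, inst, ⟨fun s => isEmptyElim s, fun {a} => isEmptyElim a⟩,
      fun {a} => isEmptyElim a, h1, h2, h3⟩
  · obtain ⟨σ, hσ⟩ := exists_surjective_nat S
    exact ZS.main S σ hσ
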